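/- On the larger domain where only aggregate revenues must cover aggregate needs (Σ r_i ≥ Σ z_i, but possibly r_i < z_i for some i), a rule satisfying balance, highest rank independence, and needs lower bound must be the need-adjusted full-transfer rule: φ_i = z_i for all i < m and φ_m = z_m + Σ_j (r_j - z_j). -/

import Mathlib

/-- A problem in the extended domain `Z*`: nonnegative revenues and needs,
with aggregate revenues covering aggregate needs. -/
def ValidStar (m : ℕ) (r z : ℕ → ℝ) : Prop :=
  0 < m ∧ (∀ i < m, 0 ≤ r i ∧ 0 ≤ z i) ∧
    ∑ i ∈ Finset.range m, z i ≤ ∑ i ∈ Finset.range m, r i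

theorem full_transfer_on_extended_domain
    (φ : ℕ → (ℕ → ℝ) → (ℕ → ℝ) → ℕ → ℝ)
    -- φ is a rule: nonnegative allocations satisfying balance
    (hrule : ∀ m r z, ValidStar m r z →
      (∀ i < m, 0 ≤ φ m r z i) ∧
      ∑ i ∈ Finset.range m, φ m r z i = ∑ i ∈ Finset.range m, r i)
    -- highest rank independence
    (hhri : ∀ m r z r' z', ValidStar m r z → ValidStar m r' z' →
      (∀ i, i + 1 < m → r i = r' i ∧ z i = z' i) →
      ∀ i, i + 1 < m → φ m r z i = φ m r' z' i)
    -- needs lower bound on the extended domain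
    (hnlb : ∀ m r z, ValidStar m r z → ∀ i < m, z i ≤ φ m r z i) :
    ∀ m r z, ValidStar m r z →
      (∀ i, i + 1 < m → φ m r z i = z i) ∧
      φ m r z (m - 1) = z (m - 1) + ∑ j ∈ Finset.range m, (r j - z j) := by
  intro m r z hv
  obtain ⟨hm, hnn, hsum⟩ := hv
  have hv : ValidStar m r z := ⟨hm, hnn, hsum⟩
  set S : ℝ := ∑ i ∈ Finset.range m, r i - ∑ i ∈ Finset.range m, z i with hS
  have hS0 : 0 ≤ S := by simp [hS]; linarith
  set z' : ℕ → ℝ := fun j => if j = m - 1 then z (m - 1) + S else z j with hz'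
  have hmem : m - 1 ∈ Finset.range m := Finset.mem_range.2 (by omega)
  have hdiff : ∀ i, z' i - z i = if i = m - 1 then S else 0 := by
    intro i
    simp only [hz']
    split_ifs with h
    · subst h; ring
    · ring
  have hz'sum : ∑ i ∈ Finset.range m, z' i = ∑ i ∈ Finset.range m, r i := by
    have h1 : ∑ i ∈ Finset.range m, (z' i - z i) = S := by
      simp_rw [hdiff]
      rw [Finset.sum_ite_eq' (Finset.range m) (m - 1) (fun _ => S), if_pos hmem]
    rw [Finset.sum_sub_distrib] at h1
    simp only [hS] at h1 ⊢
    linarith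
  have hv' : ValidStar m r z' := by
    refine ⟨hm, fun i hi => ⟨(hnn i hi).1, ?_⟩, le_of_eq hz'sum⟩
    simp only [hz']
    split_ifs with h
    · have := (hnn (m - 1) (by omega)).2; linarith
    · exact (hnn i hi).2
  have hb := hrule m r z' hv'
  have hl := hnlb m r z' hv'
  have heq : ∀ i < m, φ m r z' i = z' i := by
    have h0 : ∑ i ∈ Finset.range m, (φ m r z' i - z' i) = 0 := by
      rw [Finset.sum_sub_distrib, hb.2, hz'sum]; ring
    intro i hi
    have := (Finset.sum_eq_zero_iff_of_nonneg
      (fun j hj => sub_nonneg.2 (hl j (Finset.mem_range.1 hj)))).1 h0 i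
      (Finset.mem_range.2 hi)
    linarith
  have hri := hhri m r z r z' hv hv'
    (fun i hi => ⟨rfl, by simp [hz', show i ≠ m - 1 by omega]⟩)
  have part1 : ∀ i, i + 1 < m → φ m r z i = z i := by
    intro i hi
    rw [hri i hi, heq i (by omega)]
    simp [hz', show i ≠ m - 1 by omega]
  refine ⟨part1, ?_⟩
  have hm1 : m - 1 + 1 = m := Nat.succ_pred_eq_of_pos hm
  have hbz := hrule m r z hv
  have hsplit : ∑ i ∈ Finset.range (m - 1), φ m r z i + φ m r z (m - 1)
      = ∑ i ∈ Finset.range m, r i := by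
    rw [← Finset.sum_range_succ, hm1]; exact hbz.2
  have hzsplit : ∑ i ∈ Finset.range (m - 1), z i + z (m - 1)
      = ∑ i ∈ Finset.range m, z i := by
    rw [← Finset.sum_range_succ, hm1]
  have hphi : ∑ i ∈ Finset.range (m - 1), φ m r z i
      = ∑ i ∈ Finset.range (m - 1), z i :=
    Finset.sum_congr rfl (fun i hi => part1 i (by have := Finset.mem_range.1 hi; omega))
  rw [Finset.sum_sub_distrib]
  rw [hphi] at hsplit
  linarith
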